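/- The dimension of the ℚ-vector space spanned by the m cyclic shifts of a vector (c_1,...,c_m) ∈ ℚ^m equals m - deg gcd(c_1 + c_2 x + ... + c_m x^{m-1}, x^m - 1), where the gcd is taken in ℚ[x]. -/

import Mathlib

open Polynomial AdjoinRoot

namespace IngletonAux

variable (m : ℕ) [NeZero m] (c : ZMod m → ℚ)

noncomputable def fpoly : ℚ[X] := ∑ i : ZMod m, C (c i) * X ^ i.val

noncomputable def wpoly : ℚ[X] := X ^ m - 1

lemma wpoly_natDegree : (wpoly m).natDegree = m := by
  have h : (wpoly m) = X ^ m - C 1 := by simp [wpoly]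
  rw [h, natDegree_X_pow_sub_C]

lemma wpoly_ne : wpoly m ≠ 0 := by
  intro h
  have h2 := wpoly_natDegree m
  rw [h] at h2
  simp at h2
  exact (NeZero.ne m) h2.symm

/-- An equivalence between `ZMod m` and `Fin m`. -/
def zfEquiv : ZMod m ≃ Fin m where
  toFun i := ⟨i.val, ZMod.val_lt i⟩
  invFun k := ((k : ℕ) : ZMod m)
  left_inv i := ZMod.natCast_rightInverse i
  right_inv k := by
    ext
    simp [ZMod.val_cast_of_lt k.isLt]

noncomputable def pb : PowerBasis ℚ (AdjoinRoot (wpoly m)) := AdjoinRoot.powerBasis (wpoly_ne m)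

lemma pb_dim : (pb m).dim = m := by
  rw [pb, AdjoinRoot.powerBasis_dim, wpoly_natDegree]

/-- Basis of `AdjoinRoot (X^m - 1)` indexed by `ZMod m`, with `i`-th vector `root ^ i.val`. -/
noncomputable def bR : Module.Basis (ZMod m) ℚ (AdjoinRoot (wpoly m)) :=
  (pb m).basis.reindex ((finCongr (pb_dim m)).trans (zfEquiv m).symm)

lemma bR_apply (i : ZMod m) : bR m i = root (wpoly m) ^ i.val := by
  rw [bR, Module.Basis.reindex_apply, PowerBasis.basis_eq_pow]
  rw [show (pb m).gen = root (wpoly m) from AdjoinRoot.powerBasis_gen _]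
  congr 1

/-- The linear equivalence `(ZMod m → ℚ) ≃ₗ[ℚ] AdjoinRoot (X^m-1)`. -/
noncomputable def eL : (ZMod m → ℚ) ≃ₗ[ℚ] AdjoinRoot (wpoly m) :=
  (Pi.basisFun ℚ (ZMod m)).equiv (bR m) (Equiv.refl _)

lemma eL_apply (v : ZMod m → ℚ) :
    eL m v = ∑ i : ZMod m, v i • root (wpoly m) ^ i.val := by
  conv_lhs => rw [← (Pi.basisFun ℚ (ZMod m)).sum_repr v]
  rw [map_sum]
  refine Finset.sum_congr rfl fun i _ => ?_
  rw [map_smul, Pi.basisFun_repr]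
  congr 1
  rw [eL, Module.Basis.equiv_apply, Equiv.refl_apply, bR_apply]

lemma root_pow_m : root (wpoly m) ^ m = 1 := by
  have h0 : AdjoinRoot.mk (wpoly m) (wpoly m) = 0 := AdjoinRoot.mk_self
  rw [wpoly, map_sub, map_pow, AdjoinRoot.mk_X, map_one, sub_eq_zero] at h0
  exact h0

lemma root_pow_mod (n : ℕ) : root (wpoly m) ^ n = root (wpoly m) ^ (n % m) := by
  conv_lhs => rw [← Nat.div_add_mod n m]
  rw [pow_add, pow_mul, root_pow_m, one_pow, one_mul]

lemma mk_fpoly :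
    AdjoinRoot.mk (wpoly m) (fpoly m c) = ∑ i : ZMod m, c i • root (wpoly m) ^ i.val := by
  rw [fpoly, map_sum]
  refine Finset.sum_congr rfl fun i _ => ?_
  rw [map_mul, map_pow, AdjoinRoot.mk_X, AdjoinRoot.mk_C, ← AdjoinRoot.algebraMap_eq,
    ← Algebra.smul_def]

lemma eL_shift (t : ZMod m) :
    eL m (fun i => c (i - t)) = root (wpoly m) ^ t.val * AdjoinRoot.mk (wpoly m) (fpoly m c) := by
  rw [eL_apply, mk_fpoly, Finset.mul_sum]
  refine Fintype.sum_equiv (Equiv.subRight t) _ _ fun i => ?_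
  simp only [Equiv.subRight_apply]
  rw [mul_smul_comm]
  congr 1
  rw [← pow_add]
  have h1 : i.val = (t.val + (i - t).val) % m := by
    conv_lhs => rw [show i = t + (i - t) by ring]
    rw [ZMod.val_add]
  rw [h1, ← root_pow_mod]

lemma shifts_set_eq :
    (Set.range fun t : ZMod m => fun i : ZMod m => c (i + t)) =
      Set.range fun t : ZMod m => fun i : ZMod m => c (i - t) := by
  ext x
  constructor
  · rintro ⟨t, rfl⟩
    exact ⟨-t, by funext i; simp [sub_neg_eq_add]⟩
  · rintro ⟨t, rfl⟩
    exact ⟨-t, by funext i; simp [sub_eq_add_neg]⟩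

lemma span_pows_mul (y : AdjoinRoot (wpoly m)) :
    Submodule.span ℚ (Set.range fun t : ZMod m => root (wpoly m) ^ t.val * y) =
      Submodule.restrictScalars ℚ (Ideal.span {y}) := by
  apply le_antisymm
  · rw [Submodule.span_le]
    rintro x ⟨t, rfl⟩
    rw [SetLike.mem_coe, Submodule.restrictScalars_mem]
    exact Ideal.mul_mem_left _ _ (Ideal.subset_span (Set.mem_singleton y))
  · rintro x hx
    rw [Submodule.restrictScalars_mem] at hx
    obtain ⟨r, rfl⟩ := Ideal.mem_span_singleton'.mp hx
    have hr : r ∈ Submodule.span ℚ (Set.range (bR m)) := by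
      rw [(bR m).span_eq]; trivial
    refine Submodule.span_induction (p := fun z _ =>
      z * y ∈ Submodule.span ℚ (Set.range fun t : ZMod m => root (wpoly m) ^ t.val * y))
      ?_ ?_ ?_ ?_ hr
    · rintro z ⟨t, rfl⟩
      show bR m t * y ∈ _
      rw [bR_apply]
      exact Submodule.subset_span ⟨t, rfl⟩
    · show (0 : AdjoinRoot (wpoly m)) * y ∈ _
      rw [zero_mul]; exact Submodule.zero_mem _
    · intro a b _ _ ha hb
      show (a + b) * y ∈ _
      rw [add_mul]; exact Submodule.add_mem _ ha hb
    · intro a z _ hz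
      show (a • z) * y ∈ _
      rw [smul_mul_assoc]; exact Submodule.smul_mem _ a hz

lemma ideal_fg :
    Ideal.span {AdjoinRoot.mk (wpoly m) (fpoly m c)} =
      Ideal.span {AdjoinRoot.mk (wpoly m) (EuclideanDomain.gcd (fpoly m c) (wpoly m))} := by
  apply le_antisymm
  · rw [Ideal.span_singleton_le_span_singleton]
    exact map_dvd _ (EuclideanDomain.gcd_dvd_left _ _)
  · rw [Ideal.span_singleton_le_span_singleton]
    refine ⟨AdjoinRoot.mk (wpoly m) (EuclideanDomain.gcdA (fpoly m c) (wpoly m)), ?_⟩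
    conv_lhs => rw [EuclideanDomain.gcd_eq_gcd_ab (fpoly m c) (wpoly m)]
    rw [map_add, map_mul, map_mul, AdjoinRoot.mk_self, zero_mul, add_zero]

/-- The key dimension computation: if `X^m - 1 = g * h` then the ideal generated by
`mk g` in `AdjoinRoot (X^m-1)` has `ℚ`-dimension `natDegree h`. -/
theorem key (g h : ℚ[X]) (hg : g ≠ 0) (hh : h ≠ 0) (hwgh : wpoly m = g * h) :
    Module.finrank ℚ
      (Submodule.restrictScalars ℚ (Ideal.span {AdjoinRoot.mk (wpoly m) g})) = h.natDegree := by
  classical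
  set d := h.natDegree with hd
  set v : Fin d → AdjoinRoot (wpoly m) := fun k => AdjoinRoot.mk (wpoly m) (g * X ^ (k : ℕ))
    with hv
  have hli : LinearIndependent ℚ v := by
    rw [Fintype.linearIndependent_iff]
    intro a ha k
    set q : ℚ[X] := ∑ j : Fin d, C (a j) * X ^ (j : ℕ) with hq
    have hmk : AdjoinRoot.mk (wpoly m) (g * q) = 0 := by
      rw [hq, Finset.mul_sum, map_sum, ← ha]
      refine Finset.sum_congr rfl fun j _ => ?_
      simp only [hv]
      rw [AdjoinRoot.smul_mk]
      congr 1
      rw [smul_eq_C_mul]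
      ring
    rw [AdjoinRoot.mk_eq_zero, hwgh] at hmk
    have hdvd : h ∣ q := (mul_dvd_mul_iff_left hg).mp hmk
    have hq0 : q = 0 := by
      refine eq_zero_of_dvd_of_degree_lt hdvd ?_
      rw [degree_eq_natDegree hh, ← hd]
      refine lt_of_le_of_lt (degree_sum_le _ _) ?_
      refine (Finset.sup_lt_iff (by exact_mod_cast WithBot.bot_lt_coe d)).mpr ?_
      intro j _
      refine lt_of_le_of_lt ?_ (?_ : ((j : ℕ) : WithBot ℕ) < (d : WithBot ℕ))
      · rw [C_mul_X_pow_eq_monomial]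
        exact degree_monomial_le _ _
      · exact_mod_cast j.isLt
    have hco : q.coeff (k : ℕ) = a k := by
      rw [hq, finset_sum_coeff]
      simp only [C_mul_X_pow_eq_monomial, coeff_monomial, Fin.val_eq_val]
      simp [Finset.sum_ite_eq']
    rw [hq0, coeff_zero] at hco
    exact hco.symm
  have hspan : Submodule.restrictScalars ℚ (Ideal.span {AdjoinRoot.mk (wpoly m) g}) =
      Submodule.span ℚ (Set.range v) := by
    apply le_antisymm
    · rintro x hx
      rw [Submodule.restrictScalars_mem] at hx
      obtain ⟨p', hp⟩ := Ideal.mem_span_singleton'.mp hx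
      obtain ⟨p, rfl⟩ := AdjoinRoot.mk_surjective p'
      subst hp
      set hm : ℚ[X] := h * C h.leadingCoeff⁻¹ with hhm
      have hmono : hm.Monic := monic_mul_leadingCoeff_inv hh
      have hmdeg : hm.degree = h.degree := degree_mul_leadingCoeff_inv h hh
      have hmd : hm.natDegree = d := natDegree_eq_of_degree_eq hmdeg
      set r : ℚ[X] := p %ₘ hm with hr
      have hsplit : AdjoinRoot.mk (wpoly m) p * AdjoinRoot.mk (wpoly m) g =
          AdjoinRoot.mk (wpoly m) (g * r) := by
        conv_lhs => rw [← modByMonic_add_div p hm]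
        rw [← map_mul, ← hr]
        have : (r + hm * (p /ₘ hm)) * g = g * r + wpoly m * (C h.leadingCoeff⁻¹ * (p /ₘ hm)) := by
          rw [hwgh, hhm]; ring
        rw [this, map_add, map_mul, map_mul, AdjoinRoot.mk_self, zero_mul, add_zero]
      rw [hsplit]
      have hrdeg : r.degree < (d : WithBot ℕ) := by
        rw [← hmd, ← degree_eq_natDegree (hmono.ne_zero)]
        exact degree_modByMonic_lt p hmono
      have hrnat : r = 0 ∨ r.natDegree < d := by
        rcases eq_or_ne r 0 with h0 | h0
        · exact Or.inl h0
        · right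
          rw [degree_eq_natDegree h0] at hrdeg
          exact_mod_cast hrdeg
      rcases hrnat with h0 | hlt
      · rw [h0, mul_zero, map_zero]
        exact Submodule.zero_mem _
      · rw [as_sum_range' r d hlt, Finset.mul_sum, map_sum]
        refine Submodule.sum_mem _ fun k hk => ?_
        rw [Finset.mem_range] at hk
        have : g * (monomial k) (r.coeff k) = r.coeff k • (g * X ^ k) := by
          rw [smul_eq_C_mul, ← C_mul_X_pow_eq_monomial]; ring
        rw [this, ← AdjoinRoot.smul_mk]
        exact Submodule.smul_mem _ _ (Submodule.subset_span ⟨⟨k, hk⟩, rfl⟩)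
    · rw [Submodule.span_le]
      rintro x ⟨k, rfl⟩
      rw [SetLike.mem_coe, Submodule.restrictScalars_mem, hv]
      refine Ideal.mem_span_singleton'.mpr ⟨AdjoinRoot.mk (wpoly m) (X ^ (k : ℕ)), ?_⟩
      rw [← map_mul]
      congr 1
      ring
  rw [hspan, finrank_span_eq_card hli, Fintype.card_fin]

end IngletonAux

open IngletonAux Polynomial AdjoinRoot in
/-- Ingleton's theorem: the dimension of the span of the `m` cyclic shifts of
`(c₁,…,c_m) ∈ ℚ^m` equals `m - deg gcd(c₁ + c₂x + … + c_m x^{m-1}, x^m - 1)` in `ℚ[x]`. -/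
theorem ingleton_circulant_rank (m : ℕ) [NeZero m] (c : ZMod m → ℚ) :
    Module.finrank ℚ (Submodule.span ℚ
      (Set.range (fun t : ZMod m => fun i : ZMod m => c (i + t)))) =
    m - (EuclideanDomain.gcd
          (∑ i : ZMod m, Polynomial.C (c i) * Polynomial.X ^ i.val)
          (Polynomial.X ^ m - 1) : Polynomial ℚ).natDegree := by
  classical
  have hf : (∑ i : ZMod m, Polynomial.C (c i) * Polynomial.X ^ i.val) = fpoly m c := rfl
  have hw : (Polynomial.X ^ m - 1 : Polynomial ℚ) = wpoly m := rfl
  rw [hf, hw]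
  set g : ℚ[X] := EuclideanDomain.gcd (fpoly m c) (wpoly m) with hgdef
  have hgw : g ∣ wpoly m := EuclideanDomain.gcd_dvd_right _ _
  obtain ⟨h, hwgh⟩ := hgw
  have hg : g ≠ 0 := by
    intro h0
    rw [hgdef, EuclideanDomain.gcd_eq_zero_iff] at h0
    exact wpoly_ne m h0.2
  have hh : h ≠ 0 := by
    intro h0
    rw [h0, mul_zero] at hwgh
    exact wpoly_ne m hwgh
  have hdeg : g.natDegree + h.natDegree = m := by
    rw [← natDegree_mul hg hh, ← hwgh, wpoly_natDegree]
  have e2 : Submodule.map ((eL m : (ZMod m → ℚ) →ₗ[ℚ] AdjoinRoot (wpoly m)))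
      (Submodule.span ℚ (Set.range (fun t : ZMod m => fun i : ZMod m => c (i + t)))) =
      Submodule.restrictScalars ℚ (Ideal.span {AdjoinRoot.mk (wpoly m) g}) := by
    rw [shifts_set_eq, Submodule.map_span, ← Set.range_comp]
    simp only [LinearEquiv.coe_coe]
    have hcomp : (⇑(eL m) ∘ fun t : ZMod m => fun i : ZMod m => c (i - t)) =
        fun t : ZMod m => root (wpoly m) ^ t.val * AdjoinRoot.mk (wpoly m) (fpoly m c) :=
      funext fun t => eL_shift m c t
    rw [hcomp, span_pows_mul, ideal_fg]
  have e1 := LinearEquiv.finrank_map_eq (eL m)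
    (Submodule.span ℚ (Set.range (fun t : ZMod m => fun i : ZMod m => c (i + t))))
  rw [← e1, e2, key m g h hg hh hwgh]
  omega
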